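/- Let 0 ≤ r₁ < ρ < r₂ and α ∈ ℂ with |α|^{−1/2} = ρ. Let f be a meromorphic function on the annulus A = {x ∈ ℂ : r₁ < |x| < r₂} of the form f(x) = g(x²) for a meromorphic function g, whose only singularities in A are double poles at the two points x = ±α^{−1/2} (for some fixed square root α^{−1/2}). Let c_l (l ∈ ℤ) be the coefficients of x^{2l} in the Laurent expansion of f valid on {r₁ < |x| < ρ}, and c'_l those of the Laurent expansion valid on {ρ < |x| < r₂}. Then for every l ∈ ℤ: c'_l − c_l = − (l+1) · α^{l} · [ (1 − α x²)² f(x) ]|_{x = α^{−1/2}} + (1/2) · α^{l} · α^{−1/2} · ( d/dx [ (1 − α x²)² f(x) ] )|_{x = α^{−1/2}}, where the same determination α^{−1/2} is used throughout. -/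

import Mathlib

open Complex Metric Set

private lemma E1_alg (Gw A D αv d : ℂ) :
    Gw / (-αv * d) ^ 2 = A / (-αv * d) ^ 2 + (-D * αv⁻¹) / (-αv * d)
      + (αv⁻¹) ^ 2 * (((Gw - A) / d - D) / d) := by
  simp only [div_eq_mul_inv, mul_inv, inv_pow, neg_mul, inv_neg, neg_neg, sub_mul, mul_pow]
  ring

private lemma coeff_integral {s : ℝ} (hs : 0 < s) (a : ℤ → ℂ) (g : ℂ → ℂ)
    (h : ∀ w : ℂ, ‖w‖ = s → HasSum (fun m : ℤ => a m * w ^ m) (g w)) (n : ℤ) :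
    (∮ z in C((0:ℂ), s), z ^ (-n - 1) * g z) = (2 * Real.pi * I) * a n := by
  have habs : ∀ θ : ℝ, ‖(circleMap 0 s θ)‖ = s := by
    intro θ; rw [norm_circleMap_zero, abs_of_pos hs]
  have hne : ∀ θ : ℝ, circleMap 0 s θ ≠ 0 := fun θ => circleMap_ne_center hs.ne'
  have hsC : ‖(s : ℂ)‖ = s := by rw [Complex.norm_real, Real.norm_eq_abs, abs_of_pos hs]
  have hsum : Summable (fun m : ℤ => ‖(a m)‖ * s ^ m) := by
    have h1 : Summable (fun m : ℤ => ‖a m * (s:ℂ) ^ m‖) :=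
      summable_norm_iff.mpr (h (s : ℂ) hsC).summable
    refine h1.congr fun m => ?_
    rw [norm_mul, norm_zpow, hsC]
  have key : HasSum
      (fun m : ℤ => ∫ θ in (0:ℝ)..2 * Real.pi,
        deriv (circleMap 0 s) θ * (a m * (circleMap 0 s θ) ^ (m - n - 1)))
      (∫ θ in (0:ℝ)..2 * Real.pi,
        deriv (circleMap 0 s) θ * ((circleMap 0 s θ) ^ (-n - 1) * g (circleMap 0 s θ))) := by
    refine intervalIntegral.hasSum_integral_of_dominated_convergence
      (fun m θ => (s * s ^ (-n-1:ℤ)) * (‖(a m)‖ * s ^ m))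
      (fun m => ?_) (fun m => ?_) ?_ ?_ ?_
    · apply Continuous.aestronglyMeasurable
      simp only [deriv_circleMap]
      exact ((continuous_circleMap 0 s).mul continuous_const).mul
        (continuous_const.mul ((continuous_circleMap 0 s).zpow₀ _ (fun θ => Or.inl (hne θ))))
    · filter_upwards with θ _
      rw [norm_mul, norm_mul,
        deriv_circleMap, norm_mul, habs, Complex.norm_I, mul_one, norm_zpow, habs]
      apply le_of_eq
      rw [show m - n - 1 = -n-1 + m by ring, zpow_add₀ hs.ne' (-n-1) m]; ring
    · filter_upwards with θ _
      exact (hsum.mul_left _)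
    · exact intervalIntegrable_const
    · filter_upwards with θ _
      have h0 := (h _ (habs θ)).mul_left ((circleMap 0 s θ) ^ (-n - 1))
      have h1 : (fun m : ℤ => (circleMap 0 s θ) ^ (-n-1) * (a m * (circleMap 0 s θ) ^ m))
          = fun m : ℤ => a m * (circleMap 0 s θ) ^ (m - n - 1) := by
        funext m
        rw [show m - n - 1 = -n-1 + m by ring, zpow_add₀ (hne θ) (-n-1) m]; ring
      rw [h1] at h0
      exact h0.mul_left _
  have hterm : ∀ m : ℤ, (∫ θ in (0:ℝ)..2 * Real.pi,
      deriv (circleMap 0 s) θ * (a m * (circleMap 0 s θ) ^ (m - n - 1)))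
      = if m = n then (2 * Real.pi * I) * a n else 0 := by
    intro m
    have hcirc : (∫ θ in (0:ℝ)..2 * Real.pi,
        deriv (circleMap 0 s) θ * (a m * (circleMap 0 s θ) ^ (m - n - 1)))
        = ∮ z in C((0:ℂ), s), a m * z ^ (m - n - 1) := rfl
    rw [hcirc, circleIntegral.integral_const_mul]
    by_cases hm : m = n
    · subst hm
      have : (∮ z in C((0:ℂ), s), z ^ (m - m - 1)) = 2 * Real.pi * I := by
        have h2 := circleIntegral.integral_sub_inv_of_mem_ball (c := (0:ℂ)) (w := 0) (R := s)
          (by simpa using hs)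
        have h3 : (∮ z in C((0:ℂ), s), z ^ (m - m - 1)) = ∮ z in C((0:ℂ), s), (z - 0)⁻¹ := by
          apply circleIntegral.integral_congr hs.le
          intro z hz
          simp [zpow_neg]
        rw [h3, h2]
      rw [if_pos rfl, this]; ring
    · rw [if_neg hm]
      have h4 : (∮ z in C((0:ℂ), s), z ^ (m - n - 1)) = 0 := by
        have := circleIntegral.integral_sub_zpow_of_ne (n := m - n - 1) (by omega) 0 0 s
        simpa using this
      rw [h4, mul_zero]
  rw [funext hterm] at key
  have := (hasSum_ite_eq n ((2 * Real.pi * I) * a n)).unique key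
  have hdef : (∮ z in C((0:ℂ), s), z ^ (-n - 1) * g z)
      = ∫ θ in (0:ℝ)..2 * Real.pi,
        deriv (circleMap 0 s) θ * ((circleMap 0 s θ) ^ (-n - 1) * g (circleMap 0 s θ)) := by
    simp only [circleIntegral, smul_eq_mul]
  rw [hdef, ← this]

private lemma pole_inner (A B u : ℂ) (hu : ‖u‖ < 1) :
    HasSum (fun k : ℕ => (A * (k + 1) + B) * u ^ k) (A / (1 - u) ^ 2 + B / (1 - u)) := by
  have h1u : (1 : ℂ) - u ≠ 0 := by
    intro h; rw [sub_eq_zero] at h; rw [← h] at hu; simp at hu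
  have h1 := (hasSum_coe_mul_geometric_of_norm_lt_one hu).mul_left A
  have h2 := (hasSum_geometric_of_norm_lt_one hu).mul_left (A + B)
  have h3 := h1.add h2
  have hf : (fun k : ℕ => A * ((k : ℂ) * u ^ k) + (A + B) * u ^ k)
      = fun k : ℕ => (A * (k + 1) + B) * u ^ k := by funext k; ring
  rw [hf] at h3
  convert h3 using 1
  · rfl
  rw [div_add_div _ _ (pow_ne_zero 2 h1u) h1u, div_eq_iff (mul_ne_zero (pow_ne_zero 2 h1u) h1u)]
  field_simp
  ring

private lemma pole_outer_val (A B u : ℂ) (hu0 : u ≠ 0) (h1u : (1:ℂ) - u ≠ 0) (hu1 : u - 1 ≠ 0) :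
    A * u⁻¹ * (u⁻¹ / (1 - u⁻¹) ^ 2) - B * u⁻¹ * (1 - u⁻¹)⁻¹
      = A / (1 - u) ^ 2 + B / (1 - u) := by
  rw [show (1:ℂ) - u⁻¹ = (u - 1) * u⁻¹ by field_simp]
  rw [mul_pow, mul_inv, div_eq_mul_inv, mul_inv, inv_inv, inv_pow, inv_inv]
  have h2 : (u - 1) ^ 2 ≠ 0 := pow_ne_zero _ hu1
  field_simp
  ring

private lemma pole_outer (A B u : ℂ) (hu : 1 < ‖u‖) :
    HasSum (fun k : ℕ => (A * k - B) * (u⁻¹) ^ (k + 1)) (A / (1 - u) ^ 2 + B / (1 - u)) := by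
  have hu0 : u ≠ 0 := by intro h; rw [h] at hu; norm_num at hu
  have hv : ‖u⁻¹‖ < 1 := by rw [norm_inv]; exact inv_lt_one_of_one_lt₀ hu
  have h1u : (1 : ℂ) - u ≠ 0 := by
    intro h; rw [sub_eq_zero] at h; rw [← h] at hu; simp at hu
  have h1v : (1 : ℂ) - u⁻¹ ≠ 0 := by
    intro h; rw [sub_eq_zero] at h; rw [← h] at hv; simp at hv
  have hu1 : u - 1 ≠ 0 := by rw [← neg_sub]; exact neg_ne_zero.mpr h1u
  have h1 := ((hasSum_coe_mul_geometric_of_norm_lt_one hv).mul_left (A * u⁻¹))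
  have h2 := ((hasSum_geometric_of_norm_lt_one hv).mul_left (B * u⁻¹))
  have h3 := h1.sub h2
  have hf : (fun k : ℕ => A * u⁻¹ * ((k : ℂ) * (u⁻¹) ^ k) - B * u⁻¹ * (u⁻¹) ^ k)
      = fun k : ℕ => (A * k - B) * (u⁻¹) ^ (k + 1) := by funext k; rw [pow_succ]; ring
  rw [hf] at h3
  rw [pole_outer_val A B u hu0 h1u hu1] at h3
  exact h3

set_option maxHeartbeats 1600000 in
/-- Coefficient-jump formula across a double pole: if `f(x) = G(x²)/(1 − αx²)²` with `G`
analytic on the annulus `{r₁² < |w| < r₂²}`, so that the only singularities of `f` on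
`{r₁ < |x| < r₂}` are the (at most) double poles `x = ±α^{−1/2}` of modulus `ρ`, and if
`c`, `c'` are the Laurent coefficients of `f` in powers `x^{2l}` on the inner annulus
`{r₁ < |x| < ρ}` and the outer annulus `{ρ < |x| < r₂}` respectively, then for the fixed
square root `β = α^{−1/2}`:
`c'_l − c_l = −(l+1) α^l [(1−αx²)² f(x)]|_{x=β} + (1/2) α^l β (d/dx[(1−αx²)² f(x)])|_{x=β}`,
the bracketed function being the analytic continuation `x ↦ G(x²)`. -/
theorem stmt19 (r₁ ρ r₂ : ℝ) (h0 : 0 ≤ r₁) (h1 : r₁ < ρ) (h2 : ρ < r₂)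
    (α : ℂ) (hα : ‖α‖ ^ (-(1 : ℝ) / 2) = ρ)
    (β : ℂ) (hβ : β ^ 2 = α⁻¹)
    (f G : ℂ → ℂ)
    (hG : AnalyticOnNhd ℂ G {w : ℂ | r₁ ^ 2 < ‖w‖ ∧ ‖w‖ < r₂ ^ 2})
    (hf : ∀ x : ℂ, r₁ < ‖x‖ → ‖x‖ < r₂ → x ^ 2 ≠ α⁻¹ →
      f x = G (x ^ 2) / (1 - α * x ^ 2) ^ 2)
    (c c' : ℤ → ℂ)
    (hc : ∀ x : ℂ, r₁ < ‖x‖ → ‖x‖ < ρ →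
      HasSum (fun l : ℤ => c l * x ^ (2 * l)) (f x))
    (hc' : ∀ x : ℂ, ρ < ‖x‖ → ‖x‖ < r₂ →
      HasSum (fun l : ℤ => c' l * x ^ (2 * l)) (f x))
    (l : ℤ) :
    c' l - c l = -((l : ℂ) + 1) * α ^ l * G (β ^ 2)
        + (1 / 2) * α ^ l * β * deriv (fun x : ℂ => G (x ^ 2)) β := by
  have hρ : 0 < ρ := lt_of_le_of_lt h0 h1
  have hρ2 : 0 < ρ ^ 2 := by positivity
  have hαabs : ‖α‖ ≠ 0 := by
    intro h; rw [h, Real.zero_rpow (by norm_num)] at hα; linarith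
  have hα0 : α ≠ 0 := fun h => hαabs (by simp [h])
  have hw₀abs : ‖α⁻¹‖ = ρ ^ 2 := by
    rw [norm_inv, ← hα, ← Real.rpow_natCast (‖α‖ ^ (-(1:ℝ)/2)) 2,
      ← Real.rpow_mul (norm_nonneg _)]
    norm_num
    rw [Real.rpow_neg_one]
  have hαabs' : ‖α‖ = (ρ ^ 2)⁻¹ := by rw [← hw₀abs, norm_inv, inv_inv]
  set w₀ : ℂ := α⁻¹ with hw₀def
  have hw₀0 : w₀ ≠ 0 := inv_ne_zero hα0
  have hr₁ρ : r₁ ^ 2 < ρ ^ 2 := by nlinarith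
  have hρr₂ : ρ ^ 2 < r₂ ^ 2 := by nlinarith
  have hw₀mem : w₀ ∈ {w : ℂ | r₁ ^ 2 < ‖w‖ ∧ ‖w‖ < r₂ ^ 2} := by
    constructor <;> rw [hw₀abs] <;> assumption
  set A : ℂ := G w₀ with hA
  set D : ℂ := deriv G w₀ with hD
  set B : ℂ := -D * α⁻¹ with hB
  set M : ℂ → ℂ := dslope (dslope G w₀) w₀ with hM
  -- explicit formula for M off w₀
  have hMw : ∀ w : ℂ, w ≠ w₀ → M w = ((G w - A) / (w - w₀) - D) / (w - w₀) := by
    intro w hw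
    rw [hM, dslope_of_ne _ hw, slope_def_field, dslope_same, dslope_of_ne _ hw, slope_def_field]
  -- key algebraic identity
  have hE1 : ∀ w : ℂ, w ≠ w₀ → G w / (1 - α * w) ^ 2
      = (A / (1 - α * w) ^ 2 + B / (1 - α * w)) + w₀ ^ 2 * M w := by
    intro w hw
    have hsub : w - w₀ ≠ 0 := sub_ne_zero.mpr hw
    have h1aw : 1 - α * w = -α * (w - w₀) := by
      rw [hw₀def]; field_simp; ring
    rw [hMw w hw, h1aw, hB, hw₀def]
    exact E1_alg (G w) A D α (w - α⁻¹)
  -- M differentiable on the big annulus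
  have hMdiff : ∀ w : ℂ, r₁ ^ 2 < ‖w‖ → ‖w‖ < r₂ ^ 2 →
      DifferentiableAt ℂ M w := by
    intro w hw1 hw2
    rcases eq_or_ne w w₀ with rfl | hw
    · obtain ⟨p, hp⟩ := hG w₀ hw₀mem
      exact (hp.has_fpower_series_dslope_fslope.has_fpower_series_dslope_fslope).analyticAt.differentiableAt
    · have hev : M =ᶠ[nhds w] fun z => ((G z - A) / (z - w₀) - D) / (z - w₀) := by
        filter_upwards [isOpen_ne.mem_nhds hw] with z hz
        exact hMw z hz
      rw [hev.differentiableAt_iff]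
      have hGd : DifferentiableAt ℂ G w := (hG w ⟨hw1, hw2⟩).differentiableAt
      have hid : DifferentiableAt ℂ (fun z : ℂ => z - w₀) w :=
        differentiableAt_id.sub_const w₀
      have hne : w - w₀ ≠ 0 := sub_ne_zero.mpr hw
      exact (((hGd.sub_const A).div hid hne).sub_const D).div hid hne
  -- φ differentiable on the big annulus
  have hφdiff : ∀ w : ℂ, r₁ ^ 2 < ‖w‖ → ‖w‖ < r₂ ^ 2 →
      DifferentiableAt ℂ (fun z : ℂ => z ^ (-l - 1) * (w₀ ^ 2 * M z)) w := by
    intro w hw1 hw2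
    have hw0 : w ≠ 0 := by
      intro h; rw [h] at hw1; simp at hw1; nlinarith
    exact (differentiableAt_zpow.mpr (Or.inl hw0)).mul
      ((differentiableAt_const _).mul (hMdiff w hw1 hw2))
  -- translation of inner expansion to the w-plane
  have hcw : ∀ w : ℂ, r₁ ^ 2 < ‖w‖ → ‖w‖ < ρ ^ 2 →
      HasSum (fun m : ℤ => c m * w ^ m) (G w / (1 - α * w) ^ 2) := by
    intro w hw1 hw2
    obtain ⟨x, hx2⟩ : ∃ x : ℂ, x ^ 2 = w := ⟨w ^ ((2:ℕ):ℂ)⁻¹, Complex.cpow_nat_inv_pow w two_ne_zero⟩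
    have habsx : ‖x‖ ^ 2 = ‖w‖ := by rw [← norm_pow, hx2]
    have hxnn : 0 ≤ ‖x‖ := norm_nonneg _
    have hx1 : r₁ < ‖x‖ := by nlinarith
    have hxρ : ‖x‖ < ρ := by nlinarith
    have hxr₂ : ‖x‖ < r₂ := lt_trans hxρ h2
    have hxne : x ^ 2 ≠ α⁻¹ := by
      intro h
      rw [hx2] at h
      rw [h, hw₀abs] at hw2
      linarith
    have hsum := hc x hx1 hxρ
    rw [hf x hx1 hxr₂ hxne, hx2] at hsum
    have hfun : (fun m : ℤ => c m * x ^ (2 * m)) = fun m : ℤ => c m * w ^ m := by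
      funext m
      have hx2' : x ^ (2:ℤ) = w := by
        rw [show (2:ℤ) = ((2:ℕ):ℤ) from rfl, zpow_natCast, hx2]
      rw [zpow_mul, hx2']
    rwa [hfun] at hsum
  -- translation of outer expansion to the w-plane
  have hcw' : ∀ w : ℂ, ρ ^ 2 < ‖w‖ → ‖w‖ < r₂ ^ 2 →
      HasSum (fun m : ℤ => c' m * w ^ m) (G w / (1 - α * w) ^ 2) := by
    intro w hw1 hw2
    obtain ⟨x, hx2⟩ : ∃ x : ℂ, x ^ 2 = w := ⟨w ^ ((2:ℕ):ℂ)⁻¹, Complex.cpow_nat_inv_pow w two_ne_zero⟩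
    have habsx : ‖x‖ ^ 2 = ‖w‖ := by rw [← norm_pow, hx2]
    have hxnn : 0 ≤ ‖x‖ := norm_nonneg _
    have hx1 : ρ < ‖x‖ := by nlinarith
    have hxr₂ : ‖x‖ < r₂ := by nlinarith
    have hxr₁ : r₁ < ‖x‖ := lt_trans h1 hx1
    have hxne : x ^ 2 ≠ α⁻¹ := by
      intro h
      rw [hx2] at h
      rw [h, hw₀abs] at hw1
      linarith
    have hsum := hc' x hx1 hxr₂
    rw [hf x hxr₁ hxr₂ hxne, hx2] at hsum
    have hfun : (fun m : ℤ => c' m * x ^ (2 * m)) = fun m : ℤ => c' m * w ^ m := by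
      funext m
      have hx2' : x ^ (2:ℤ) = w := by
        rw [show (2:ℤ) = ((2:ℕ):ℤ) from rfl, zpow_natCast, hx2]
      rw [zpow_mul, hx2']
    rwa [hfun] at hsum
  -- the jump coefficients
  set pin : ℤ → ℂ := fun m => if 0 ≤ m then (A * ((m : ℂ) + 1) + B) * α ^ m else 0 with hpin
  set pout : ℤ → ℂ := fun m => if m ≤ -1 then (-(A * ((m : ℂ) + 1)) - B) * α ^ m else 0 with hpout
  -- inner expansion of the pole part, over ℤ
  have hpinZ : ∀ w : ℂ, ‖w‖ < ρ ^ 2 →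
      HasSum (fun m : ℤ => pin m * w ^ m) (A / (1 - α * w) ^ 2 + B / (1 - α * w)) := by
    intro w hw
    have hu : ‖α * w‖ < 1 := by
      rw [norm_mul, hαabs']
      have h5 : (ρ^2)⁻¹ * ‖w‖ < (ρ^2)⁻¹ * ρ^2 :=
        mul_lt_mul_of_pos_left hw (by positivity)
      rwa [inv_mul_cancel₀ hρ2.ne'] at h5
    have hps := pole_inner A B (α * w) hu
    refine (Function.Injective.hasSum_iff (g := fun k : ℕ => (k : ℤ))
      Nat.cast_injective ?_).mp ?_
    · intro m hm
      have hm' : ¬ (0 ≤ m) := by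
        intro h
        exact hm ⟨m.toNat, by simpa using Int.toNat_of_nonneg h⟩
      simp [hpin, hm']
    · have hfun : ((fun m : ℤ => pin m * w ^ m) ∘ fun k : ℕ => (k : ℤ))
          = fun k : ℕ => (A * ((k : ℂ) + 1) + B) * (α * w) ^ k := by
        funext k
        simp only [Function.comp, hpin]
        rw [if_pos (Int.natCast_nonneg k), zpow_natCast, zpow_natCast, mul_pow]
        push_cast
        ring
      rw [hfun]
      exact hps
  -- outer expansion of the pole part, over ℤ
  have hpoutZ : ∀ w : ℂ, ρ ^ 2 < ‖w‖ →
      HasSum (fun m : ℤ => pout m * w ^ m) (A / (1 - α * w) ^ 2 + B / (1 - α * w)) := by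
    intro w hw
    have hw0 : w ≠ 0 := by
      intro h; rw [h] at hw; simp at hw; nlinarith
    have hu : 1 < ‖α * w‖ := by
      rw [norm_mul, hαabs']
      have h5 : (ρ^2)⁻¹ * ρ^2 < (ρ^2)⁻¹ * ‖w‖ :=
        mul_lt_mul_of_pos_left hw (by positivity)
      rwa [inv_mul_cancel₀ hρ2.ne'] at h5
    have hαw : α * w ≠ 0 := mul_ne_zero hα0 hw0
    have hps := pole_outer A B (α * w) hu
    refine (Function.Injective.hasSum_iff (g := fun k : ℕ => -(k : ℤ) - 1)
      (fun a b hab => by simp only [] at hab; omega) ?_).mp ?_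
    · intro m hm
      have hm' : ¬ (m ≤ -1) := by
        intro h
        refine hm ⟨(-m-1).toNat, ?_⟩
        have h9 : (((-m-1).toNat : ℤ)) = -m-1 := Int.toNat_of_nonneg (by omega)
        simp only []
        omega
      simp [hpout, hm']
    · have hfun : ((fun m : ℤ => pout m * w ^ m) ∘ fun k : ℕ => -(k : ℤ) - 1)
          = fun k : ℕ => (A * (k : ℂ) - B) * ((α * w)⁻¹) ^ (k + 1) := by
        funext k
        simp only [Function.comp, hpout]
        rw [if_pos (by omega : -(k:ℤ) - 1 ≤ -1)]
        have hpow : α ^ (-(k:ℤ)-1) * w ^ (-(k:ℤ)-1) = ((α*w)⁻¹) ^ (k+1) := by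
          rw [← mul_zpow, show -(k:ℤ)-1 = -(((k+1:ℕ) : ℤ)) by push_cast; ring, zpow_neg,
            zpow_natCast, ← inv_pow]
        rw [mul_assoc, hpow]
        push_cast
        ring
      rw [hfun]
      exact hps
  -- radii
  set s : ℝ := (r₁ ^ 2 + ρ ^ 2) / 2 with hs
  set t : ℝ := (ρ ^ 2 + r₂ ^ 2) / 2 with ht
  have hs0 : 0 < s := by positivity
  have hst : s ≤ t := by simp only [hs, ht]; linarith
  have hsr₁ : r₁ ^ 2 < s := by simp only [hs]; linarith
  have hsρ : s < ρ ^ 2 := by simp only [hs]; linarith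
  have htρ : ρ ^ 2 < t := by simp only [ht]; linarith
  have htr₂ : t < r₂ ^ 2 := by simp only [ht]; linarith
  -- inner coefficient identity
  have hinner : (∮ z in C((0:ℂ), s), z ^ (-l - 1) * (w₀ ^ 2 * M z))
      = (2 * Real.pi * I) * (c l - pin l) := by
    apply coeff_integral hs0 (fun m => c m - pin m) (fun z => w₀ ^ 2 * M z) ?_ l
    intro w hw
    have hw1 : r₁ ^ 2 < ‖w‖ := by rw [hw]; exact hsr₁
    have hw2 : ‖w‖ < ρ ^ 2 := by rw [hw]; exact hsρ
    have hwne : w ≠ w₀ := by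
      intro h; rw [h, hw₀abs] at hw2; linarith
    have h3 := (hcw w hw1 hw2).sub (hpinZ w hw2)
    have hfun : (fun m : ℤ => c m * w ^ m - pin m * w ^ m)
        = fun m : ℤ => (c m - pin m) * w ^ m := by funext m; ring
    rw [hfun] at h3
    have hval : G w / (1 - α * w) ^ 2 - (A / (1 - α * w) ^ 2 + B / (1 - α * w))
        = w₀ ^ 2 * M w := by rw [hE1 w hwne]; ring
    rwa [hval] at h3
  -- outer coefficient identity
  have houter : (∮ z in C((0:ℂ), t), z ^ (-l - 1) * (w₀ ^ 2 * M z))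
      = (2 * Real.pi * I) * (c' l - pout l) := by
    apply coeff_integral (lt_of_lt_of_le hs0 hst) (fun m => c' m - pout m)
      (fun z => w₀ ^ 2 * M z) ?_ l
    intro w hw
    have hw1 : ρ ^ 2 < ‖w‖ := by rw [hw]; exact htρ
    have hw2 : ‖w‖ < r₂ ^ 2 := by rw [hw]; exact htr₂
    have hwne : w ≠ w₀ := by
      intro h; rw [h, hw₀abs] at hw1; linarith
    have h3 := (hcw' w hw1 hw2).sub (hpoutZ w hw1)
    have hfun : (fun m : ℤ => c' m * w ^ m - pout m * w ^ m)
        = fun m : ℤ => (c' m - pout m) * w ^ m := by funext m; ring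
    rw [hfun] at h3
    have hval : G w / (1 - α * w) ^ 2 - (A / (1 - α * w) ^ 2 + B / (1 - α * w))
        = w₀ ^ 2 * M w := by rw [hE1 w hwne]; ring
    rwa [hval] at h3
  -- annulus Cauchy theorem
  have hann : (∮ z in C((0:ℂ), t), z ^ (-l - 1) * (w₀ ^ 2 * M z))
      = ∮ z in C((0:ℂ), s), z ^ (-l - 1) * (w₀ ^ 2 * M z) := by
    apply circleIntegral_eq_of_differentiable_on_annulus_off_countable hs0 hst countable_empty
    · intro z hz
      obtain ⟨hz1, hz2⟩ := hz
      rw [mem_closedBall_zero_iff] at hz1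
      rw [mem_ball_zero_iff] at hz2
      push_neg at hz2
      exact (hφdiff z (lt_of_lt_of_le hsr₁ hz2) (lt_of_le_of_lt hz1 htr₂)).continuousAt.continuousWithinAt
    · intro z hz
      obtain ⟨⟨hz1, hz2⟩, -⟩ := hz
      rw [mem_ball_zero_iff] at hz1
      rw [mem_closedBall_zero_iff] at hz2
      push_neg at hz2
      exact hφdiff z (lt_of_lt_of_le hsr₁ hz2.le) (lt_trans hz1 htr₂)
  -- combine
  have h2πI : (2 * (Real.pi:ℂ) * I) ≠ 0 := by
    simp [Real.pi_ne_zero, I_ne_zero]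
  have hjump : c' l - c l = pout l - pin l := by
    have := hinner.symm.trans (hann.symm.trans houter)
    have h6 : c l - pin l = c' l - pout l := mul_left_cancel₀ h2πI this
    linear_combination -h6
  -- compute the derivative of G ∘ (·^2) at β
  have hd1 : HasDerivAt (fun x : ℂ => x ^ 2) (2 * β) β := by
    simpa using hasDerivAt_pow 2 β
  have hd2 : HasDerivAt G D (β ^ 2) := by
    rw [hβ]
    exact (hG w₀ hw₀mem).differentiableAt.hasDerivAt
  have hder : deriv (fun x : ℂ => G (x ^ 2)) β = D * (2 * β) :=
    (hd2.comp β hd1).deriv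
  have hGβ : G (β ^ 2) = A := by rw [hβ]
  rw [hjump, hder, hGβ]
  -- final algebra
  have hβα : β ^ 2 = α⁻¹ := hβ.trans hw₀def
  by_cases hl : 0 ≤ l
  · have hl' : ¬ (l ≤ -1) := by omega
    simp only [hpin, hpout, if_pos hl, if_neg hl']
    rw [hB]
    linear_combination (-D * α ^ l) * hβα
  · have hl' : l ≤ -1 := by omega
    simp only [hpin, hpout, if_neg hl, if_pos hl']
    rw [hB]
    linear_combination (-D * α ^ l) * hβα
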